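/- arXiv:1205.6107 — 7 statements merged into one kernel-verified Lean document; each statement's English description precedes it below -/
import Mathlib

section
/- For all real t ≠ 0, cosh t ≤ (sinh t / t)^3. -/
open Real

/-- generic: f 0 = 0 and f' ≥ 0 on [0,∞) implies f ≥ 0 on [0,∞) -/
lemma laz_aux (f f' : ℝ → ℝ) (hd : ∀ x, HasDerivAt f (f' x) x)
    (h0 : f 0 = 0) (hf' : ∀ x, 0 ≤ x → 0 ≤ f' x) :
    ∀ t, 0 ≤ t → 0 ≤ f t := by
  intro t ht
  have hmono : MonotoneOn f (Set.Ici (0:ℝ)) := by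
    apply monotoneOn_of_deriv_nonneg (convex_Ici 0)
    · exact fun x _ => (hd x).continuousAt.continuousWithinAt
    · exact fun x _ => (hd x).differentiableAt.differentiableWithinAt
    · intro x _
      rw [(hd x).deriv]
      exact hf' x (le_of_lt (by simpa using ‹x ∈ interior (Set.Ici (0:ℝ))›))
  have := hmono Set.self_mem_Ici (Set.mem_Ici.2 ht) ht
  linarith [h0 ▸ this]

noncomputable def lazE (a b c d e : ℝ) : ℝ → ℝ := fun x =>
  a * Real.sinh (3*x) - b * Real.sinh x - c * (x * Real.cosh x)
    - d * (x^2 * Real.sinh x) - e * (x^3 * Real.cosh x)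

noncomputable def lazO (p q r s u : ℝ) : ℝ → ℝ := fun x =>
  p * Real.cosh (3*x) - q * Real.cosh x - r * (x * Real.sinh x)
    - s * (x^2 * Real.cosh x) - u * (x^3 * Real.sinh x)

lemma three_mul_deriv (x : ℝ) : HasDerivAt (fun y : ℝ => 3*y) 3 x := by
  simpa using (hasDerivAt_id x).const_mul 3

lemma lazE_deriv (a b c d e x : ℝ) :
    HasDerivAt (lazE a b c d e) (lazO (3*a) (b+c) (c+2*d) (d+3*e) e x) x := by
  have h1 : HasDerivAt (fun y : ℝ => Real.sinh (3*y)) (Real.cosh (3*x) * 3) x :=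
    (Real.hasDerivAt_sinh (3*x)).comp x (three_mul_deriv x)
  have h2 := Real.hasDerivAt_sinh x
  have h3 := (hasDerivAt_id x).mul (Real.hasDerivAt_cosh x)
  have h4 := (hasDerivAt_pow 2 x).mul (Real.hasDerivAt_sinh x)
  have h5 := (hasDerivAt_pow 3 x).mul (Real.hasDerivAt_cosh x)
  have := ((((h1.const_mul a).sub (h2.const_mul b)).sub (h3.const_mul c)).sub
    (h4.const_mul d)).sub (h5.const_mul e)
  refine this.congr_deriv ?_
  simp only [lazO, id_eq]
  ring

lemma lazO_deriv (p q r s u x : ℝ) :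
    HasDerivAt (lazO p q r s u) (lazE (3*p) (q+r) (r+2*s) (s+3*u) u x) x := by
  have h1 : HasDerivAt (fun y : ℝ => Real.cosh (3*y)) (Real.sinh (3*x) * 3) x :=
    (Real.hasDerivAt_cosh (3*x)).comp x (three_mul_deriv x)
  have h2 := Real.hasDerivAt_cosh x
  have h3 := (hasDerivAt_id x).mul (Real.hasDerivAt_sinh x)
  have h4 := (hasDerivAt_pow 2 x).mul (Real.hasDerivAt_cosh x)
  have h5 := (hasDerivAt_pow 3 x).mul (Real.hasDerivAt_sinh x)
  have := ((((h1.const_mul p).sub (h2.const_mul q)).sub (h3.const_mul r)).sub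
    (h4.const_mul s)).sub (h5.const_mul u)
  refine this.congr_deriv ?_
  simp only [lazE, id_eq]
  ring

lemma lazE_zero (a b c d e : ℝ) : lazE a b c d e 0 = 0 := by
  simp [lazE]

lemma lazO_zero (p q r s u : ℝ) (h : p = q) : lazO p q r s u 0 = 0 := by
  simp [lazO, h]

/-- sinh x ≤ x cosh x for x ≥ 0 -/
lemma sinh_le_mul_cosh : ∀ x : ℝ, 0 ≤ x → Real.sinh x ≤ x * Real.cosh x := by
  have := laz_aux (fun x => x * Real.cosh x - Real.sinh x) (fun x => x * Real.sinh x)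
    (fun x => by
      have h := ((hasDerivAt_id x).mul (Real.hasDerivAt_cosh x)).sub (Real.hasDerivAt_sinh x)
      refine h.congr_deriv ?_
      simp only [id_eq]; ring)
    (by simp)
    (fun x hx => mul_nonneg hx (Real.sinh_nonneg_iff.2 hx))
  intro x hx
  have h := this x hx
  linarith

/-- 1 + x²/2 ≤ cosh x -/
lemma one_add_sq_le_cosh : ∀ x : ℝ, 0 ≤ x → 1 + x^2/2 ≤ Real.cosh x := by
  have := laz_aux (fun x => Real.cosh x - 1 - x^2/2) (fun x => Real.sinh x - x)
    (fun x => by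
      have h := ((Real.hasDerivAt_cosh x).sub_const 1).sub
        ((hasDerivAt_pow 2 x).div_const 2)
      refine h.congr_deriv ?_
      ring)
    (by simp)
    (fun x hx => by
      have : x ≤ Real.sinh x := Real.self_le_sinh_iff.2 hx
      linarith)
  intro x hx
  have h := this x hx
  linarith

lemma laz7_nonneg : ∀ x : ℝ, 0 ≤ x → 0 ≤ lazO 2187 843 504 84 4 x := by
  intro x hx
  have hc : 1 + x^2/2 ≤ Real.cosh x := one_add_sq_le_cosh x hx
  have hs : Real.sinh x ≤ x * Real.cosh x := sinh_le_mul_cosh x hx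
  have hsn : 0 ≤ Real.sinh x := (Real.sinh_nonneg_iff.2 hx)
  have h3 : Real.cosh (3*x) = 4 * Real.cosh x ^ 3 - 3 * Real.cosh x :=
    Real.cosh_three_mul x
  simp only [lazO, h3]
  nlinarith [mul_nonneg hx hsn, mul_nonneg (mul_nonneg hx hx) hx,
    sq_nonneg x, sq_nonneg (x*x), mul_nonneg hx hx,
    mul_nonneg (mul_nonneg hx hx) ((Real.sinh_nonneg_iff.2 hx)),
    mul_le_mul_of_nonneg_left hs (mul_nonneg hx hx),
    mul_le_mul_of_nonneg_left hs hx,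
    mul_le_mul_of_nonneg_left hc (le_of_lt (Real.cosh_pos (x := x))),
    Real.cosh_pos (x := x), sq_nonneg (Real.cosh x - 1)]

lemma laz_chain : ∀ x : ℝ, 0 ≤ x → 0 ≤ lazE 1 3 0 0 4 x := by
  have h7 := laz7_nonneg
  have h6 : ∀ x, 0 ≤ x → 0 ≤ lazE 729 483 360 72 4 x := by
    refine laz_aux _ _ (fun x => ?_) (lazE_zero _ _ _ _ _) h7
    have := lazE_deriv 729 483 360 72 4 x; norm_num at this ⊢; exact this
  have h5 : ∀ x, 0 ≤ x → 0 ≤ lazO 243 243 240 60 4 x := by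
    refine laz_aux _ _ (fun x => ?_) (lazO_zero _ _ _ _ _ rfl) h6
    have := lazO_deriv 243 243 240 60 4 x; norm_num at this ⊢; exact this
  have h4 : ∀ x, 0 ≤ x → 0 ≤ lazE 81 99 144 48 4 x := by
    refine laz_aux _ _ (fun x => ?_) (lazE_zero _ _ _ _ _) h5
    have := lazE_deriv 81 99 144 48 4 x; norm_num at this ⊢; exact this
  have h3 : ∀ x, 0 ≤ x → 0 ≤ lazO 27 27 72 36 4 x := by
    refine laz_aux _ _ (fun x => ?_) (lazO_zero _ _ _ _ _ rfl) h4
    have := lazO_deriv 27 27 72 36 4 x; norm_num at this ⊢; exact this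
  have h2 : ∀ x, 0 ≤ x → 0 ≤ lazE 9 3 24 24 4 x := by
    refine laz_aux _ _ (fun x => ?_) (lazE_zero _ _ _ _ _) h3
    have := lazE_deriv 9 3 24 24 4 x; norm_num at this ⊢; exact this
  have h1 : ∀ x, 0 ≤ x → 0 ≤ lazO 3 3 0 12 4 x := by
    refine laz_aux _ _ (fun x => ?_) (lazO_zero _ _ _ _ _ rfl) h2
    have := lazO_deriv 3 3 0 12 4 x; norm_num at this ⊢; exact this
  refine laz_aux _ _ (fun x => ?_) (lazE_zero _ _ _ _ _) h1
  have := lazE_deriv 1 3 0 0 4 x; norm_num at this ⊢; exact this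

lemma laz_main (t : ℝ) (ht : 0 < t) : Real.cosh t ≤ (Real.sinh t / t) ^ 3 := by
  have h := laz_chain t ht.le
  simp only [lazE, Real.sinh_three_mul] at h
  have key : t^3 * Real.cosh t ≤ Real.sinh t ^ 3 := by nlinarith
  rw [div_pow, le_div_iff₀ (pow_pos ht 3)]
  linarith

theorem lazarevic_inequality (t : ℝ) (ht : t ≠ 0) :
    Real.cosh t ≤ (Real.sinh t / t) ^ 3 := by
  rcases ht.lt_or_gt with h | h
  · have := laz_main (-t) (by linarith)
    simpa [Real.sinh_neg, Real.cosh_neg, neg_div_neg_eq] using this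
  · exact laz_main t h
end

section
/- Let N be a positive integer, 1 ≤ k ≤ 2N-1, λ_k = 2 sin²(kπ/(4N)), and let γ_k ≥ 0 be defined by cosh γ_k = (1 + √(25 + 8λ_k))/4. Then λ_k/6 ≤ cosh γ_k − 3/2 ≤ λ_k/5. -/
theorem cosh_gamma_bounds (N k : ℕ) (hN : 0 < N) (hk1 : 1 ≤ k) (hk2 : k ≤ 2 * N - 1)
    (lam γ : ℝ) (hlam : lam = 2 * Real.sin (k * Real.pi / (4 * N)) ^ 2)
    (hγ : 0 ≤ γ) (hcosh : Real.cosh γ = (1 + Real.sqrt (25 + 8 * lam)) / 4) :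
    lam / 6 ≤ Real.cosh γ - 3 / 2 ∧ Real.cosh γ - 3 / 2 ≤ lam / 5 := by
  have h0 : 0 ≤ lam := by
    rw [hlam]; positivity
  have h2 : lam ≤ 2 := by
    rw [hlam]
    nlinarith [Real.sin_sq_le_one (k * Real.pi / (4 * N))]
  have hlow : 5 + 2 * lam / 3 ≤ Real.sqrt (25 + 8 * lam) := by
    rw [Real.le_sqrt (by linarith)]
    · nlinarith
    · linarith

  have hup : Real.sqrt (25 + 8 * lam) ≤ 5 + 4 * lam / 5 := by
    rw [Real.sqrt_le_iff]
    constructor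
    all_goals nlinarith
  constructor <;> rw [hcosh] <;> linarith
end

section
/- Let N be a positive integer, 1 ≤ k ≤ 2N-1, λ_k = 2 sin²(kπ/(4N)), and let δ_k ≥ 0 satisfy cosh δ_k = (−1 + √(25 + 8λ_k))/4. Then sinh δ_k ≥ √(λ_k/3). -/
theorem sinh_delta_lower_bound (N k : ℕ) (hN : 0 < N) (hk1 : 1 ≤ k) (hk2 : k ≤ 2 * N - 1)
    (lam δ : ℝ) (hlam : lam = 2 * Real.sin (k * Real.pi / (4 * N)) ^ 2)
    (hδ : 0 ≤ δ) (hcosh : Real.cosh δ = (-1 + Real.sqrt (25 + 8 * lam)) / 4) :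
    Real.sinh δ ≥ Real.sqrt (lam / 3) := by
  have hlam0 : 0 ≤ lam := by rw [hlam]; positivity
  set s := Real.sqrt (25 + 8 * lam) with hs
  have hs2 : s ^ 2 = 25 + 8 * lam := Real.sq_sqrt (by linarith)
  have hs5 : 5 ≤ s := by
    nlinarith [Real.sqrt_nonneg (25 + 8 * lam)]
  have hsinh0 : 0 ≤ Real.sinh δ := Real.sinh_nonneg_iff.mpr hδ
  have hsq : Real.sinh δ ^ 2 ≥ lam / 3 := by
    have h := Real.cosh_sq δ
    nlinarith [hs2, hs5, hlam0]
  have h1 : Real.sqrt (lam / 3) ≤ Real.sqrt (Real.sinh δ ^ 2) :=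
    Real.sqrt_le_sqrt (by linarith)
  rwa [Real.sqrt_sq hsinh0] at h1
end

section
/- Let N be a positive integer, 1 ≤ k ≤ 2N-1, λ_k = 2 sin²(kπ/(4N)), and α_k ≥ 0 with cosh α_k = 1 + λ_k/5. Then exp(−α_k) ≤ exp(−k/(2√5 N)). -/
/-- `sinh x ≤ 2 * x` for `0 ≤ x ≤ 2/3`. -/
lemma sinh_le_two_mul {x : ℝ} (hx0 : 0 ≤ x) (hx : x ≤ 2/3) : Real.sinh x ≤ 2 * x := by
  have h1 : 1 - x ≤ Real.exp (-x) := by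
    have := Real.add_one_le_exp (-x); linarith
  have hxlt : 1 - x > 0 := by linarith
  have h2 : Real.exp x ≤ 1 / (1 - x) := by
    rw [le_div_iff₀ hxlt]
    have : Real.exp x * (1 - x) ≤ Real.exp x * Real.exp (-x) := by
      exact mul_le_mul_of_nonneg_left h1 (Real.exp_pos x).le
    rwa [← Real.exp_add, add_neg_cancel, Real.exp_zero] at this
  rw [Real.sinh_eq]
  have key : 1 / (1 - x) - (1 - x) ≤ 4 * x := by
    rw [div_sub' (ne_of_gt hxlt), div_le_iff₀ hxlt]
    nlinarith
  linarith

theorem exp_neg_alpha_bound (N k : ℕ) (hN : 0 < N) (hk1 : 1 ≤ k) (hk2 : k ≤ 2 * N - 1)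
    (lam α : ℝ) (hlam : lam = 2 * Real.sin (k * Real.pi / (4 * N)) ^ 2)
    (hα : 0 ≤ α) (hcosh : Real.cosh α = 1 + lam / 5) :
    Real.exp (-α) ≤ Real.exp (-(k : ℝ) / (2 * Real.sqrt 5 * N)) := by
  have hNpos : (0 : ℝ) < N := by exact_mod_cast hN
  have hkpos : (0 : ℝ) < k := by exact_mod_cast hk1
  have hk2' : (k : ℝ) ≤ 2 * N - 1 := by
    have : (k : ℝ) ≤ ((2 * N - 1 : ℕ) : ℝ) := by exact_mod_cast hk2
    rwa [Nat.cast_sub (by omega), Nat.cast_mul, Nat.cast_ofNat, Nat.cast_one] at this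
  have hs5 : (0 : ℝ) < Real.sqrt 5 := Real.sqrt_pos.2 (by norm_num)
  have hs5sq : Real.sqrt 5 ^ 2 = 5 := Real.sq_sqrt (by norm_num)
  have hs5gt2 : (2 : ℝ) < Real.sqrt 5 := by
    nlinarith [Real.sq_sqrt (show (0:ℝ) ≤ 5 by norm_num), hs5]
  set c : ℝ := (k : ℝ) / (2 * Real.sqrt 5 * N) with hc
  set θ : ℝ := k * Real.pi / (4 * N) with hθ
  have hc0 : 0 ≤ c := by positivity
  -- x = c/2
  set x : ℝ := c / 2 with hxdef
  have hx0 : 0 ≤ x := by positivity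
  have hxle : x ≤ 1 / (2 * Real.sqrt 5) := by
    rw [hxdef, hc, div_div, div_le_div_iff₀ (by positivity) (by positivity)]
    nlinarith
  have hxle23 : x ≤ 2/3 := by
    have : (1:ℝ) / (2 * Real.sqrt 5) ≤ 2/3 := by
      rw [div_le_div_iff₀ (by positivity) (by norm_num)]
      nlinarith
    linarith
  -- Jordan: sin θ ≥ k/(2N)
  have hθ0 : 0 ≤ θ := by positivity
  have hθle : θ ≤ Real.pi / 2 := by
    rw [hθ, div_le_div_iff₀ (by positivity) (by norm_num)]
    nlinarith [Real.pi_pos]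
  have hJordan : (k : ℝ) / (2 * N) ≤ Real.sin θ := by
    have := Real.mul_le_sin hθ0 hθle
    rw [hθ] at this ⊢
    have hpi := Real.pi_pos
    calc (k : ℝ) / (2 * N) = 2 / Real.pi * (k * Real.pi / (4 * N)) := by
          field_simp; ring
      _ ≤ Real.sin (k * Real.pi / (4 * N)) := this
  -- sinh x ≤ 2x, and √5 * 2x = k/(2N)
  have hsinh : Real.sinh x ≤ 2 * x := sinh_le_two_mul hx0 hxle23
  have h2x : Real.sqrt 5 * (2 * x) = (k : ℝ) / (2 * N) := by
    rw [hxdef, hc]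
    field_simp
  have hsinh2 : Real.sqrt 5 * Real.sinh x ≤ Real.sin θ := by
    calc Real.sqrt 5 * Real.sinh x ≤ Real.sqrt 5 * (2 * x) := by
          exact mul_le_mul_of_nonneg_left hsinh hs5.le
      _ = (k : ℝ) / (2 * N) := h2x
      _ ≤ Real.sin θ := hJordan
  have hsinh0 : 0 ≤ Real.sinh x := Real.sinh_nonneg_iff.2 hx0
  have hsq : Real.sinh x ^ 2 ≤ Real.sin θ ^ 2 / 5 := by
    have := mul_self_le_mul_self (by positivity) hsinh2
    nlinarith
  -- cosh c ≤ cosh α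
  have hcoshc : Real.cosh c = 1 + 2 * Real.sinh x ^ 2 := by
    have : c = 2 * x := by rw [hxdef]; ring
    rw [this, Real.cosh_two_mul, Real.cosh_sq]
    ring
  have hle : Real.cosh c ≤ Real.cosh α := by
    rw [hcoshc, hcosh, hlam]
    linarith [hsq]
  have hcα : c ≤ α := by
    have := Real.cosh_le_cosh.1 hle
    rwa [abs_of_nonneg hc0, abs_of_nonneg hα] at this
  rw [Real.exp_le_exp, neg_div]
  exact neg_le_neg hcα
end

section
/- Let M ≥ 2 be an integer, α > 0, and ρ = sinh((M−1)α) / (5 sinh(Mα) + sinh((M−1)α)). Then 0 < 1 − 6ρ ≤ (5/6)(cosh α − 1 + 1/(M−1) + sinh α). -/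
lemma key_exp (k : ℕ) (hk : 1 ≤ k) (α : ℝ) (hα : 0 < α) :
    (k : ℝ) * (2 * Real.sinh α) ≤ Real.exp (2 * ((k : ℝ) * α)) - 1 := by
  set e := Real.exp α with he
  have he1 : 1 ≤ e := Real.one_le_exp hα.le
  have hinv : e * e⁻¹ = 1 := mul_inv_cancel₀ (by positivity)
  have h2 : Real.exp (2 * α) = e * e := by rw [two_mul, Real.exp_add]
  have hsinh : 2 * Real.sinh α = e - e⁻¹ := by
    rw [Real.sinh_eq, Real.exp_neg]; ring
  have ha : (0:ℝ) ≤ Real.exp (2*α) - 1 := by nlinarith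
  have hb := one_add_mul_le_pow (a := Real.exp (2*α) - 1) (by linarith) k
  have hpow : (1 + (Real.exp (2*α) - 1)) ^ k = Real.exp (2 * ((k:ℝ) * α)) := by
    rw [show 1 + (Real.exp (2*α) - 1) = Real.exp (2*α) by ring, ← Real.exp_nat_mul]
    ring_nf
  rw [hpow] at hb
  have hstep : 2 * Real.sinh α ≤ Real.exp (2*α) - 1 := by
    rw [hsinh, h2]; nlinarith [mul_nonneg (sub_nonneg.2 he1) (sub_nonneg.2 (by nlinarith : e⁻¹ ≤ e))]
  have hk1 : (1:ℝ) ≤ (k:ℝ) := by exact_mod_cast hk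
  nlinarith [mul_le_mul_of_nonneg_left hstep (by linarith : (0:ℝ) ≤ (k:ℝ))]

theorem rho_estimate (M : ℕ) (hM : 2 ≤ M) (α : ℝ) (hα : 0 < α)
    (ρ : ℝ)
    (hρ : ρ = Real.sinh ((M - 1 : ℝ) * α) / (5 * Real.sinh (M * α) + Real.sinh ((M - 1 : ℝ) * α))) :
    0 < 1 - 6 * ρ ∧
    1 - 6 * ρ ≤ (5 / 6) * (Real.cosh α - 1 + 1 / ((M : ℝ) - 1) + Real.sinh α) := by
  set k : ℕ := M - 1 with hkdef
  have hk : 1 ≤ k := by omega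
  have hkcast : ((M : ℝ) - 1) = (k : ℝ) := by
    have : (M : ℝ) = (k : ℝ) + 1 := by
      have : M = k + 1 := by omega
      rw [this]; push_cast; ring
    linarith
  have hk0 : (0:ℝ) < (k:ℝ) := by exact_mod_cast hk
  set x : ℝ := ((M : ℝ) - 1) * α with hxdef
  have hx0 : 0 < x := by
    apply mul_pos _ hα; rw [hkcast]; exact hk0
  have hMx : (M : ℝ) * α = x + α := by rw [hxdef]; ring
  set s1 : ℝ := Real.sinh x with hs1def
  set s2 : ℝ := Real.sinh ((M : ℝ) * α) with hs2def
  have hs1 : 0 < s1 := Real.sinh_pos_iff.2 hx0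
  have hs12 : s1 < s2 := by
    rw [hs1def, hs2def, Real.sinh_lt_sinh, hMx]; linarith
  have hsα : 0 < Real.sinh α := Real.sinh_pos_iff.2 hα
  have hD : 0 < 5 * s2 + s1 := by linarith
  have hrw : 1 - 6 * ρ = 5 * (s2 - s1) / (5 * s2 + s1) := by
    rw [hρ]; field_simp; ring
  -- key inequality
  have hex : 0 < Real.exp x := Real.exp_pos x
  have hkey := key_exp k hk α hα
  have hxx : 2 * ((k:ℝ) * α) = x + x := by rw [hxdef, hkcast]; ring
  rw [hxx, Real.exp_add] at hkey
  have hs1eq : s1 = (Real.exp x - (Real.exp x)⁻¹) / 2 := by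
    rw [hs1def, Real.sinh_eq, Real.exp_neg]
  have hinvx : Real.exp x * (Real.exp x)⁻¹ = 1 := mul_inv_cancel₀ (by positivity)
  have hkey2 : (k:ℝ) * (Real.exp (-x)) * Real.sinh α ≤ s1 := by
    rw [Real.exp_neg, hs1eq]
    rw [show (k:ℝ) * (Real.exp x)⁻¹ * Real.sinh α ≤ (Real.exp x - (Real.exp x)⁻¹) / 2
        ↔ ((k:ℝ) * (Real.exp x)⁻¹ * Real.sinh α) * Real.exp x ≤ ((Real.exp x - (Real.exp x)⁻¹) / 2) * Real.exp x
        from (mul_le_mul_iff_of_pos_right hex).symm]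
    have e1 : ((k:ℝ) * (Real.exp x)⁻¹ * Real.sinh α) * Real.exp x = (k:ℝ) * Real.sinh α := by
      field_simp
    have e2 : ((Real.exp x - (Real.exp x)⁻¹) / 2) * Real.exp x = (Real.exp x * Real.exp x - 1) / 2 := by
      field_simp
    rw [e1, e2]; linarith
  have h3 : Real.exp (-x) * Real.sinh α ≤ s1 * (1 / (k:ℝ)) := by
    rw [mul_one_div, le_div_iff₀ hk0]; nlinarith [hkey2]
  have hs2eq : s2 = s1 * Real.cosh α + Real.cosh x * Real.sinh α := by
    rw [hs2def, hMx, Real.sinh_add, hs1def]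
  have hcx : Real.cosh x = s1 + Real.exp (-x) := by
    have := Real.cosh_sub_sinh x
    rw [hs1def]; linarith
  have goal2 : 5 * (s2 - s1) / (6 * s1) ≤ (5 / 6) * (Real.cosh α - 1 + 1 / ((M : ℝ) - 1) + Real.sinh α) := by
    rw [hkcast, div_le_iff₀ (by positivity)]
    rw [hs2eq, hcx]
    nlinarith [h3]
  constructor
  · rw [hrw]; exact div_pos (by linarith) hD
  · calc 1 - 6 * ρ = 5 * (s2 - s1) / (5 * s2 + s1) := hrw
      _ ≤ 5 * (s2 - s1) / (6 * s1) := by gcongr <;> linarith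
      _ ≤ _ := goal2
end

section
/- For every positive integer N, every ϱ ∈ (0,1), and x = π/(2N): ∑_{k=1}^{N} ϱ^{2k−1} sin((2k−1)x) ≤ (2ϱ/(1−ϱ)²) sin x. -/
lemma abs_sin_nat_mul_le (θ : ℝ) (h0 : 0 ≤ θ) (hπ : θ ≤ Real.pi) :
    ∀ n : ℕ, |Real.sin (n * θ)| ≤ n * Real.sin θ := by
  intro n
  induction n with
  | zero => simp
  | succ n ih =>
    have hs : 0 ≤ Real.sin θ := Real.sin_nonneg_of_nonneg_of_le_pi h0 hπ
    have hrw : ((n + 1 : ℕ) : ℝ) * θ = n * θ + θ := by push_cast; ring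
    rw [hrw, Real.sin_add]
    calc |Real.sin (n*θ) * Real.cos θ + Real.cos (n*θ) * Real.sin θ|
        ≤ |Real.sin (n*θ) * Real.cos θ| + |Real.cos (n*θ) * Real.sin θ| := abs_add_le _ _
      _ ≤ |Real.sin (n*θ)| * 1 + 1 * Real.sin θ := by
          rw [abs_mul, abs_mul, abs_of_nonneg hs]
          gcongr
          exacts [Real.abs_cos_le_one θ, Real.abs_cos_le_one _]
      _ ≤ n * Real.sin θ + 1 * Real.sin θ := by nlinarith
      _ = (n + 1 : ℕ) * Real.sin θ := by push_cast; ring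

theorem trig_sum_bound (N : ℕ) (hN : 0 < N) (ϱ : ℝ) (hϱ0 : 0 < ϱ) (hϱ1 : ϱ < 1)
    (x : ℝ) (hx : x = Real.pi / (2 * N)) :
    ∑ k ∈ Finset.Icc 1 N, ϱ ^ (2 * k - 1) * Real.sin ((2 * (k : ℝ) - 1) * x) ≤
      (2 * ϱ / (1 - ϱ) ^ 2) * Real.sin x := by
  have hNpos : (0 : ℝ) < N := by exact_mod_cast hN
  have hπ := Real.pi_pos
  have hx0 : 0 < x := by rw [hx]; positivity
  have hxπ : x ≤ Real.pi := by
    rw [hx]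
    have h1 : (1:ℝ) ≤ N := by exact_mod_cast hN
    rw [div_le_iff₀ (by positivity)]
    nlinarith
  have hsx : 0 ≤ Real.sin x := Real.sin_nonneg_of_nonneg_of_le_pi hx0.le hxπ
  set f : ℕ → ℝ := fun n => (n : ℝ) * ϱ ^ n with hf
  have hfnn : ∀ n, 0 ≤ f n := fun n => by positivity
  have hnorm : ‖ϱ‖ < 1 := by rw [Real.norm_eq_abs, abs_of_pos hϱ0]; exact hϱ1
  have hsumm : Summable f := by
    simpa using summable_pow_mul_geometric_of_norm_lt_one 1 hnorm
  have htsum : ∑' n, f n = ϱ / (1 - ϱ) ^ 2 :=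
    tsum_coe_mul_geometric_of_norm_lt_one hnorm
  -- step 1: termwise bound
  have step1 : ∑ k ∈ Finset.Icc 1 N, ϱ ^ (2 * k - 1) * Real.sin ((2 * (k : ℝ) - 1) * x)
      ≤ (∑ k ∈ Finset.Icc 1 N, f (2 * k - 1)) * Real.sin x := by
    rw [Finset.sum_mul]
    apply Finset.sum_le_sum
    intro k hk
    have hk1 : 1 ≤ k := (Finset.mem_Icc.mp hk).1
    have hc : (2 * (k : ℝ) - 1) = ((2 * k - 1 : ℕ) : ℝ) := by
      rw [Nat.cast_sub (by omega : 1 ≤ 2 * k)]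
      push_cast
      ring
    have habs := abs_sin_nat_mul_le x hx0.le hxπ (2 * k - 1)
    have hp : (0:ℝ) ≤ ϱ ^ (2 * k - 1) := by positivity
    calc ϱ ^ (2 * k - 1) * Real.sin ((2 * (k : ℝ) - 1) * x)
        ≤ ϱ ^ (2 * k - 1) * (((2 * k - 1 : ℕ) : ℝ) * Real.sin x) := by
          rw [hc]
          exact mul_le_mul_of_nonneg_left ((le_abs_self _).trans habs) hp
      _ = f (2 * k - 1) * Real.sin x := by rw [hf]; ring
  -- step 2: sum over odd indices ≤ tsum
  have hinj : Set.InjOn (fun k => 2 * k - 1) (Finset.Icc 1 N) := by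
    intro a ha b hb hab
    simp only [Finset.coe_Icc, Set.mem_Icc] at ha hb
    simp only at hab
    omega
  have step2 : ∑ k ∈ Finset.Icc 1 N, f (2 * k - 1) ≤ ϱ / (1 - ϱ) ^ 2 := by
    rw [← htsum]
    calc ∑ k ∈ Finset.Icc 1 N, f (2 * k - 1)
        = ∑ n ∈ (Finset.Icc 1 N).image (fun k => 2 * k - 1), f n :=
          (Finset.sum_image (fun a ha b hb => hinj ha hb)).symm
      _ ≤ ∑' n, f n := Summable.sum_le_tsum _ (fun n _ => hfnn n) hsumm
  have hq : ϱ / (1 - ϱ) ^ 2 ≤ 2 * ϱ / (1 - ϱ) ^ 2 := by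
    apply div_le_div_of_nonneg_right ?_ (by nlinarith)
    linarith
  calc ∑ k ∈ Finset.Icc 1 N, ϱ ^ (2 * k - 1) * Real.sin ((2 * (k : ℝ) - 1) * x)
      ≤ (∑ k ∈ Finset.Icc 1 N, f (2 * k - 1)) * Real.sin x := step1
    _ ≤ (ϱ / (1 - ϱ) ^ 2) * Real.sin x := mul_le_mul_of_nonneg_right step2 hsx
    _ ≤ (2 * ϱ / (1 - ϱ) ^ 2) * Real.sin x := mul_le_mul_of_nonneg_right hq hsx
end

section
/- Let N, m be positive integers and set ϱ = exp(−m/(2√5 N)) and x = π/(2N). Then 2ϱ sin x / (1−ϱ)² ≤ 80π N m^{−2} exp(−m/(6√5 N)). -/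
open Real

lemma key_ineq (t : ℝ) (ht : 0 ≤ t) :
    t ≤ Real.exp (2*t/3) - Real.exp (-(4*t/3)) := by
  have hp : (0:ℝ) < 1 + 4*t/3 := by linarith
  have h1 : 1 + 2*t/3 + (2*t/3)^2/2 ≤ Real.exp (2*t/3) := by
    have h := Real.sum_le_exp_of_nonneg (x := 2*t/3) (by positivity) 3
    simp [Finset.sum_range_succ, Nat.factorial] at h
    nlinarith [h]
  have h3 : 1 + 4*t/3 ≤ Real.exp (4*t/3) := by
    have := Real.add_one_le_exp (4*t/3); linarith
  have h2 : Real.exp (-(4*t/3)) * (1 + 4*t/3) ≤ 1 := by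
    rw [Real.exp_neg]
    have he : (0:ℝ) < Real.exp (4*t/3) := Real.exp_pos _
    rw [inv_mul_le_iff₀ he, mul_one]
    exact h3
  nlinarith [h1, h2, hp, mul_le_mul_of_nonneg_right h1 hp.le, sq_nonneg (4*t - 3/2), mul_nonneg ht (sq_nonneg t)]

theorem decay_bound (N m : ℕ) (hN : 0 < N) (hm : 0 < m)
    (ϱ x : ℝ) (hϱ : ϱ = Real.exp (-(m : ℝ) / (2 * Real.sqrt 5 * N)))
    (hx : x = Real.pi / (2 * N)) :
    2 * ϱ * Real.sin x / (1 - ϱ) ^ 2 ≤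
      80 * Real.pi * N / (m : ℝ) ^ 2 * Real.exp (-(m : ℝ) / (6 * Real.sqrt 5 * N)) := by
  have hs5 : (0:ℝ) < Real.sqrt 5 := Real.sqrt_pos.mpr (by norm_num)
  have hs5sq : Real.sqrt 5 ^ 2 = 5 := Real.sq_sqrt (by norm_num)
  have hN' : (0:ℝ) < N := by exact_mod_cast hN
  have hm' : (0:ℝ) < m := by exact_mod_cast hm
  set t : ℝ := m / (4 * Real.sqrt 5 * N) with ht_def
  have ht : 0 < t := by positivity
  have h80 : (4 * Real.sqrt 5 * (N:ℝ))^2 = 80 * (N:ℝ)^2 := by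
    rw [mul_pow, mul_pow, hs5sq]; ring
  have hm2 : (m:ℝ)^2 = 80 * N^2 * t^2 := by
    rw [ht_def, div_pow, h80]
    field_simp
  have e1 : Real.exp (-(m:ℝ) / (2 * Real.sqrt 5 * N)) = Real.exp (-(2*t)) := by
    congr 1; rw [ht_def]; field_simp; ring
  have e2 : Real.exp (-(m:ℝ) / (6 * Real.sqrt 5 * N)) = Real.exp (-(2*t/3)) := by
    congr 1; rw [ht_def]; field_simp; ring
  set e : ℝ := Real.exp (-(2*t/3)) with he_def
  have hepos : 0 < e := Real.exp_pos _
  set a : ℝ := Real.exp (-(2*t)) with ha_def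
  have hapos : 0 < a := Real.exp_pos _
  have ha1 : a < 1 := by
    rw [ha_def]; apply Real.exp_lt_one_iff.mpr; linarith
  have ha3 : a = e^3 := by
    rw [ha_def, he_def, ← Real.exp_nat_mul]
    congr 1; push_cast; ring
  have key2 : t * e ≤ 1 - a := by
    have h := key_ineq t ht.le
    have hmul := mul_le_mul_of_nonneg_right h hepos.le
    calc t * e ≤ (Real.exp (2*t/3) - Real.exp (-(4*t/3))) * e := hmul
      _ = 1 - a := by
          rw [he_def, ha_def, sub_mul, ← Real.exp_add, ← Real.exp_add]
          norm_num
          ring_nf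
  have hsq : t^2 * e^2 ≤ (1 - a)^2 := by
    nlinarith [key2, mul_nonneg ht.le hepos.le]
  rw [hϱ, hx, e1, e2]
  have hD : (0:ℝ) < (1 - a)^2 := by
    have h1a : (0:ℝ) < 1 - a := by linarith
    positivity
  rw [div_le_iff₀ hD]
  have hsin : Real.sin (Real.pi / (2*N)) ≤ Real.pi / (2*N) :=
    le_of_lt (Real.sin_lt (by positivity))
  calc 2 * a * Real.sin (Real.pi / (2*N))
      ≤ 2 * a * (Real.pi / (2*N)) := by
        exact mul_le_mul_of_nonneg_left hsin (by positivity)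
    _ = 80 * Real.pi * N / (m:ℝ)^2 * (t^2 * e^2) * e := by
        rw [hm2, ha3]; field_simp
    _ ≤ 80 * Real.pi * N / (m:ℝ)^2 * (1-a)^2 * e := by
        apply mul_le_mul_of_nonneg_right _ hepos.le
        apply mul_le_mul_of_nonneg_left hsq (by positivity)
    _ = 80 * Real.pi * N / (m:ℝ)^2 * e * (1-a)^2 := by ring
end
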